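/- Let Ω ⊂ ℝ² be an open set, let 1 < p < ∞, let w ≥ 0 be locally integrable on ℝ², and let f be a measurable function on Ω. Then ∫_Ω (M_Ω f(x))^p w(x) dx ≤ C(p) ∫_Ω |f(x)|^p Mw(x) dx, where C(p) depends only on p, M_Ω f(x) = sup { (1/|D|) ∫_D |f| : D an open disc with x ∈ D ⊂ Ω } is the local Hardy–Littlewood maximal function, and Mw(x) = sup { (1/|D|) ∫_D w : D an open disc with x ∈ D } is the Hardy–Littlewood maximal function of w. -/

import Mathlib

open MeasureTheory Complex Metric Set Filter
open scoped ENNReal NNReal ContDiff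

noncomputable section

/-- The local Hardy–Littlewood maximal function on `Ω`: the supremum of averages of `|f|`
over open discs containing `x` and contained in `Ω`. -/
def maximalOn (Ω : Set ℂ) (f : ℂ → ℝ) (x : ℂ) : ℝ≥0∞ :=
  ⨆ (c : ℂ) (r : ℝ) (_ : 0 < r) (_ : x ∈ Metric.ball c r) (_ : Metric.ball c r ⊆ Ω),
    (∫⁻ y in Metric.ball c r, (‖f y‖₊ : ℝ≥0∞)) / volume (Metric.ball c r)

open scoped Topology

namespace LocalFS

lemma le_maximalOn {Ω : Set ℂ} {f : ℂ → ℝ} {x c : ℂ} {r : ℝ} (hr : 0 < r)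
    (hx : x ∈ ball c r) (hs : ball c r ⊆ Ω) :
    (∫⁻ y in ball c r, (‖f y‖₊ : ℝ≥0∞)) / volume (ball c r) ≤ maximalOn Ω f x :=
  le_iSup_of_le c <| le_iSup_of_le r <| le_iSup_of_le hr <| le_iSup_of_le hx <|
    le_iSup_of_le hs le_rfl

lemma exists_ball_of_lt {Ω : Set ℂ} {f : ℂ → ℝ} {x : ℂ} {t : ℝ≥0∞}
    (h : t < maximalOn Ω f x) :
    ∃ c r, 0 < r ∧ x ∈ ball c r ∧ ball c r ⊆ Ω ∧
      t < (∫⁻ y in ball c r, (‖f y‖₊ : ℝ≥0∞)) / volume (ball c r) := by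
  simp only [maximalOn, lt_iSup_iff] at h
  obtain ⟨c, r, hr, hx, hs, ht⟩ := h
  exact ⟨c, r, hr, hx, hs, ht⟩

lemma isOpen_lt_maximalOn (Ω : Set ℂ) (f : ℂ → ℝ) (t : ℝ≥0∞) :
    IsOpen {x | t < maximalOn Ω f x} := by
  rw [isOpen_iff_forall_mem_open]
  intro x hx
  obtain ⟨c, r, hr, hxm, hs, ht⟩ := exists_ball_of_lt hx
  exact ⟨ball c r, fun y hy => lt_of_lt_of_le ht (le_maximalOn hr hy hs), isOpen_ball, hxm⟩

lemma measurable_maximalOn (Ω : Set ℂ) (f : ℂ → ℝ) : Measurable (maximalOn Ω f) :=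
  measurable_of_Ioi fun t => (isOpen_lt_maximalOn Ω f t).measurableSet

lemma lt_maximalOn_subset {Ω : Set ℂ} {f : ℂ → ℝ} {t : ℝ≥0∞} :
    {x | t < maximalOn Ω f x} ⊆ Ω := fun _ hx => by
  obtain ⟨c, r, _, hxm, hs, _⟩ := exists_ball_of_lt hx
  exact hs hxm

lemma vol_ball5 (c : ℂ) (r : ℝ) : volume (ball c (5 * r)) = 25 * volume (ball c r) := by
  rw [Measure.addHaar_ball_mul volume c (by norm_num : (0:ℝ) ≤ 5) r,
    Measure.addHaar_ball_center, ← Measure.addHaar_ball_center volume c r]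
  congr 1
  rw [Complex.finrank_real_complex]
  norm_num


/-- `eE t = 2 ^ t` as an extended nonneg real. -/
def eE (t : ℝ) : ℝ≥0∞ := ENNReal.ofReal ((2:ℝ) ^ t)

lemma eE_ne_zero (t : ℝ) : eE t ≠ 0 := by
  simp only [eE, Ne, ENNReal.ofReal_eq_zero, not_le]
  positivity

lemma eE_ne_top (t : ℝ) : eE t ≠ ⊤ := ENNReal.ofReal_ne_top

lemma eE_add (a b : ℝ) : eE (a + b) = eE a * eE b := by
  rw [eE, eE, eE, Real.rpow_add two_pos, ENNReal.ofReal_mul (by positivity)]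

lemma eE_mono {a b : ℝ} (h : a ≤ b) : eE a ≤ eE b :=
  ENNReal.ofReal_le_ofReal (Real.rpow_le_rpow_left_iff one_lt_two |>.2 h)

lemma eE_lt {a b : ℝ} (h : a < b) : eE a < eE b :=
  (ENNReal.ofReal_lt_ofReal_iff (by positivity)).2
    ((Real.rpow_lt_rpow_left_iff one_lt_two).2 h)

lemma eE_rpow (t y : ℝ) : eE t ^ y = eE (t * y) := by
  rw [eE, eE, ENNReal.ofReal_rpow_of_pos (by positivity), ← Real.rpow_mul (by norm_num)]

lemma eE_inv (t : ℝ) : (eE t)⁻¹ = eE (-t) := by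
  rw [eE, eE, ← ENNReal.ofReal_inv_of_pos (by positivity), ← Real.rpow_neg (by norm_num)]

lemma eE_div (a b : ℝ) : eE a / eE b = eE (a - b) := by
  rw [div_eq_mul_inv, eE_inv, ← eE_add, sub_eq_add_neg]

lemma eE_lt_one {t : ℝ} (ht : t < 0) : eE t < 1 := by
  have := eE_lt ht
  rwa [show eE 0 = 1 by simp [eE]] at this

lemma geom_sum {p : ℝ} (hp : 1 < p) : ∑' j : ℕ, eE ((j:ℝ) * (1 - p)) = (1 - eE (1 - p))⁻¹ := by
  have h : ∀ j : ℕ, eE ((j:ℝ) * (1 - p)) = eE (1 - p) ^ j := fun j => by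
    rw [← ENNReal.rpow_natCast (eE (1 - p)) j, eE_rpow]
    congr 1
    ring
  rw [tsum_congr h, ENNReal.tsum_geometric]

lemma ptsum {p : ℝ} (hp : 1 < p) (b : ℝ≥0) :
    ∑' k : ℤ, (if eE ((k:ℝ) - 1) < 2 * (b : ℝ≥0∞) then
        (50 : ℝ≥0∞) * eE (((k:ℝ) + 1) * p - ((k:ℝ) - 1)) else 0)
      ≤ 50 * eE (p + 1) * (1 - eE (1 - p))⁻¹ * ENNReal.ofReal ((4:ℝ) ^ (p - 1))
          * (b : ℝ≥0∞) ^ (p - 1) := by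
  rcases eq_or_lt_of_le b.2 with hb | hb
  · have hb0 : b = 0 := NNReal.coe_eq_zero.mp hb.symm
    subst hb0
    have : ∀ k : ℤ, (if eE ((k:ℝ) - 1) < 2 * ((0:ℝ≥0) : ℝ≥0∞) then
        (50 : ℝ≥0∞) * eE (((k:ℝ) + 1) * p - ((k:ℝ) - 1)) else 0) = 0 := by
      intro k
      simp
    rw [tsum_congr this]
    simp
  have hb' : (0:ℝ) < (b:ℝ) := hb
  set L := Real.logb 2 (2 * (b:ℝ)) with hL
  set K := ⌈L⌉ with hK
  have hcoe : 2 * (b : ℝ≥0∞) = ENNReal.ofReal (2 * (b:ℝ)) := by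
    rw [ENNReal.ofReal_mul (by norm_num), ENNReal.ofReal_ofNat, ENNReal.ofReal_coe_nnreal]
  set g : ℤ → ℝ≥0∞ := fun k => if eE ((k:ℝ) - 1) < 2 * (b : ℝ≥0∞) then
      (50 : ℝ≥0∞) * eE (((k:ℝ) + 1) * p - ((k:ℝ) - 1)) else 0 with hg
  have hsupp : Function.support g ⊆ Set.range (fun j : ℕ => K - (j:ℤ)) := by
    intro k hk
    have hkK : k ≤ K := by
      by_contra hgt
      push_neg at hgt
      apply hk
      rw [hg]
      simp only
      rw [if_neg]
      rw [hcoe, eE]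
      rw [not_lt, ENNReal.ofReal_le_ofReal_iff (by positivity)]
      have h1 : L ≤ (k:ℝ) - 1 := by
        have : (K:ℝ) ≤ (k:ℝ) - 1 := by
          have : (K + 1 : ℤ) ≤ k := hgt
          exact_mod_cast by push_cast at this ⊢; linarith
        linarith [Int.le_ceil L]
      calc 2 * (b:ℝ) = (2:ℝ) ^ L := (Real.rpow_logb two_pos (by norm_num) (by positivity)).symm
        _ ≤ (2:ℝ) ^ ((k:ℝ) - 1) := (Real.rpow_le_rpow_left_iff one_lt_two).2 h1
    exact ⟨(K - k).toNat, by show K - ((K - k).toNat : ℤ) = k; omega⟩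
  have hinj : Function.Injective (fun j : ℕ => K - (j:ℤ)) := fun a b h => by
    simp only at h; omega
  rw [← hinj.tsum_eq hsupp]
  have hterm : ∀ j : ℕ, g (K - (j:ℤ)) ≤
      (50 * eE (((K:ℝ) + 1) * p - ((K:ℝ) - 1))) * eE ((j:ℝ) * (1 - p)) := by
    intro j
    rw [hg]
    simp only
    split_ifs with h
    · rw [mul_assoc, ← eE_add]
      refine mul_le_mul_right (eE_mono ?_) _
      push_cast
      ring_nf
      exact le_rfl
    · exact zero_le
  calc ∑' j : ℕ, g (K - (j:ℤ)) ≤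
      ∑' j : ℕ, (50 * eE (((K:ℝ) + 1) * p - ((K:ℝ) - 1))) * eE ((j:ℝ) * (1 - p)) :=
        ENNReal.tsum_le_tsum hterm
    _ = (50 * eE (((K:ℝ) + 1) * p - ((K:ℝ) - 1))) * (1 - eE (1 - p))⁻¹ := by
        rw [ENNReal.tsum_mul_left, geom_sum hp]
    _ ≤ _ := by
        have hKexp : eE (((K:ℝ) + 1) * p - ((K:ℝ) - 1)) =
            eE ((K:ℝ) * (p - 1)) * eE (p + 1) := by
          rw [← eE_add]; ring_nf
        have hKle : eE ((K:ℝ) * (p - 1)) ≤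
            ENNReal.ofReal ((4:ℝ) ^ (p - 1)) * (b : ℝ≥0∞) ^ (p - 1) := by
          have h1 : (K:ℝ) * (p - 1) ≤ (L + 1) * (p - 1) :=
            mul_le_mul_of_nonneg_right (le_of_lt (Int.ceil_lt_add_one L)) (by linarith)
          have h2 : (2:ℝ) ^ ((L + 1) * (p - 1)) = (4 * (b:ℝ)) ^ (p - 1) := by
            rw [Real.rpow_mul (by norm_num), Real.rpow_add two_pos, Real.rpow_one,
              Real.rpow_logb two_pos (by norm_num) (by positivity)]
            ring_nf
          calc eE ((K:ℝ) * (p - 1)) ≤ eE ((L + 1) * (p - 1)) := eE_mono h1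
            _ = ENNReal.ofReal ((4 * (b:ℝ)) ^ (p - 1)) := by rw [eE, h2]
            _ = ENNReal.ofReal ((4:ℝ) ^ (p - 1)) * (b : ℝ≥0∞) ^ (p - 1) := by
                rw [Real.mul_rpow (by norm_num : (0:ℝ) ≤ 4) (by positivity : (0:ℝ) ≤ (b:ℝ)), ENNReal.ofReal_mul (by positivity),
                  ← ENNReal.ofReal_rpow_of_pos hb', ENNReal.ofReal_coe_nnreal]
        calc (50 * eE (((K:ℝ) + 1) * p - ((K:ℝ) - 1))) * (1 - eE (1 - p))⁻¹
            = 50 * (1 - eE (1 - p))⁻¹ * (eE ((K:ℝ) * (p - 1)) * eE (p + 1)) := by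
              rw [hKexp]; ring
          _ ≤ 50 * (1 - eE (1 - p))⁻¹ *
              ((ENNReal.ofReal ((4:ℝ) ^ (p - 1)) * (b : ℝ≥0∞) ^ (p - 1)) * eE (p + 1)) :=
              mul_le_mul_right (mul_le_mul_left hKle _) _
          _ = 50 * eE (p + 1) * (1 - eE (1 - p))⁻¹ * ENNReal.ofReal ((4:ℝ) ^ (p - 1))
              * (b : ℝ≥0∞) ^ (p - 1) := by ring

lemma eE_one : eE 1 = 2 := by rw [eE, Real.rpow_one]; norm_num

lemma perBall {Ω : Set ℂ} {f w : ℂ → ℝ} (hf : Measurable f) (hw : ∀ x, 0 ≤ w x)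
    {s : ℝ≥0∞} (hs0 : s ≠ 0) (hstop : s ≠ ⊤)
    {c : ℂ} {r : ℝ} (hr : 0 < r) (hsub : ball c r ⊆ Ω)
    (havg : s < (∫⁻ y in ball c r, (‖f y‖₊ : ℝ≥0∞)) / volume (ball c r))
    (hfin : (volume.withDensity fun x => ENNReal.ofReal (w x)) (ball c (5 * r)) ≠ ⊤) :
    (volume.withDensity fun x => ENNReal.ofReal (w x)) (ball c (5 * r)) ≤
      50 / s * ∫⁻ y in ball c r ∩ {x | s < 2 * (‖f x‖₊ : ℝ≥0∞)},
        (‖f y‖₊ : ℝ≥0∞) * maximalOn Set.univ w y := by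
  set B := ball c r with hB
  set F := {x : ℂ | s < 2 * (‖f x‖₊ : ℝ≥0∞)} with hF
  set v := volume B with hv
  have hv0 : v ≠ 0 := (measure_ball_pos volume c hr).ne'
  have hvtop : v ≠ ⊤ := measure_ball_lt_top.ne
  set L := ∫⁻ y in B, (‖f y‖₊ : ℝ≥0∞) with hL
  set J := ∫⁻ y in B ∩ F, (‖f y‖₊ : ℝ≥0∞) with hJdef
  have h1 : s * v ≤ L := by
    have := mul_le_mul_left havg.le v
    rwa [ENNReal.div_mul_cancel hv0 hvtop] at this
  have h2 : L ≤ J + s / 2 * v := by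
    have hsplit : L = ∫⁻ y in (B ∩ F) ∪ (B \ F), (‖f y‖₊ : ℝ≥0∞) := by
      rw [inter_union_diff]
    have h3 : ∫⁻ y in B \ F, (‖f y‖₊ : ℝ≥0∞) ≤ s / 2 * v := by
      calc ∫⁻ y in B \ F, (‖f y‖₊ : ℝ≥0∞) ≤ ∫⁻ _ in B \ F, s / 2 := by
            apply setLIntegral_mono_ae (aemeasurable_const)
            filter_upwards with x hx
            have h2f : 2 * (‖f x‖₊ : ℝ≥0∞) ≤ s := not_lt.1 hx.2
            rw [ENNReal.le_div_iff_mul_le (Or.inl (by norm_num)) (Or.inl (by norm_num))]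
            rwa [mul_comm]
        _ = s / 2 * volume (B \ F) := setLIntegral_const _ _
        _ ≤ s / 2 * v := mul_le_mul_right (measure_mono diff_subset) _
    calc L = ∫⁻ y in (B ∩ F) ∪ (B \ F), (‖f y‖₊ : ℝ≥0∞) := hsplit
      _ ≤ J + ∫⁻ y in B \ F, (‖f y‖₊ : ℝ≥0∞) := lintegral_union_le _ _ _
      _ ≤ J + s / 2 * v := add_le_add_right h3 _
  have h4 : s / 2 * v ≤ J := by
    have hne : s / 2 * v ≠ ⊤ :=
      ENNReal.mul_ne_top (by simp [ENNReal.div_eq_top, hstop]) hvtop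
    have : s / 2 * v + s / 2 * v ≤ J + s / 2 * v := by
      calc s / 2 * v + s / 2 * v = (s / 2 + s / 2) * v := (add_mul _ _ _).symm
        _ = s * v := by rw [ENNReal.add_halves]
        _ ≤ J + s / 2 * v := h1.trans h2
    exact ENNReal.le_of_add_le_add_right hne this
  -- the 5-ball and the maximal function of w
  set μ5 := (volume.withDensity fun x => ENNReal.ofReal (w x)) (ball c (5 * r)) with hμ5
  have hμ5eq : μ5 = ∫⁻ x in ball c (5 * r), (‖w x‖₊ : ℝ≥0∞) := by
    rw [hμ5, withDensity_apply _ measurableSet_ball]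
    exact lintegral_congr fun x => (Real.enorm_eq_ofReal (hw x)).symm
  set q := μ5 / (25 * v) with hq
  have hqtop : q ≠ ⊤ := by
    rw [hq, Ne, ENNReal.div_eq_top]
    rintro (⟨-, h⟩ | ⟨h, -⟩)
    · exact hv0 (by simpa using h)
    · exact hfin h
  have hqle : ∀ y ∈ B, q ≤ maximalOn Set.univ w y := by
    intro y hy
    have h5r : 0 < 5 * r := by linarith
    have hy5 : y ∈ ball c (5 * r) := ball_subset_ball (by linarith) hy
    have := le_maximalOn (f := w) h5r hy5 (subset_univ _)
    rwa [vol_ball5, ← hμ5eq, ← hv] at this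
  have h5 : J * q ≤ ∫⁻ y in B ∩ F, (‖f y‖₊ : ℝ≥0∞) * maximalOn Set.univ w y := by
    calc J * q = ∫⁻ y in B ∩ F, (‖f y‖₊ : ℝ≥0∞) * q := (lintegral_mul_const' q _ hqtop).symm
      _ ≤ _ := by
          apply setLIntegral_mono_ae
            ((hf.nnnorm.coe_nnreal_ennreal.mul (measurable_maximalOn _ _)).aemeasurable)
          filter_upwards with x hx
          exact mul_le_mul_right (hqle x hx.1) _
  have h6 : s * μ5 / 50 ≤ ∫⁻ y in B ∩ F, (‖f y‖₊ : ℝ≥0∞) * maximalOn Set.univ w y := by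
    refine le_trans (le_of_eq ?_) ((mul_le_mul_left h4 q).trans h5)
    rw [hq, div_eq_mul_inv, div_eq_mul_inv, div_eq_mul_inv,
      ENNReal.mul_inv (Or.inl (by norm_num)) (Or.inl (by norm_num))]
    calc s * μ5 * (50:ℝ≥0∞)⁻¹ = (s * 2⁻¹) * (μ5 * (25⁻¹ * (v * v⁻¹))) := by
          rw [ENNReal.mul_inv_cancel hv0 hvtop]
          rw [show (50:ℝ≥0∞)⁻¹ = 2⁻¹ * 25⁻¹ by
            rw [← ENNReal.mul_inv (Or.inl (by norm_num)) (Or.inl (by norm_num))]; norm_num]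
          ring
      _ = s * 2⁻¹ * v * (μ5 * (25⁻¹ * v⁻¹)) := by ring
  calc μ5 = 50 / s * (s * μ5 / 50) := by
        rw [div_eq_mul_inv, div_eq_mul_inv]
        calc μ5 = ((s⁻¹ * s) * ((50:ℝ≥0∞) * 50⁻¹)) * μ5 := by
              rw [ENNReal.inv_mul_cancel hs0 hstop,
                ENNReal.mul_inv_cancel (by norm_num) (by norm_num), one_mul, one_mul]
          _ = 50 * s⁻¹ * (s * μ5 * 50⁻¹) := by ring
    _ ≤ 50 / s * ∫⁻ y in B ∩ F, (‖f y‖₊ : ℝ≥0∞) * maximalOn Set.univ w y :=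
        mul_le_mul_right h6 _


lemma finiteOnCompacts {w : ℂ → ℝ} (hwi : LocallyIntegrable w volume) :
    IsFiniteMeasureOnCompacts (volume.withDensity fun x => ENNReal.ofReal (w x)) := by
  constructor
  intro K hK
  rw [withDensity_apply _ hK.measurableSet]
  calc ∫⁻ x in K, ENNReal.ofReal (w x) ≤ ∫⁻ x in K, (‖w x‖₊ : ℝ≥0∞) :=
        lintegral_mono fun x => Real.ofReal_le_enorm (w x)
    _ < ⊤ := (hwi.integrableOn_isCompact hK).2

/-- The weak-type estimate. -/
lemma weak {Ω : Set ℂ} {f w : ℂ → ℝ} (hf : Measurable f) (hw : ∀ x, 0 ≤ w x)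
    (hwi : LocallyIntegrable w volume) {s : ℝ≥0∞} (hs0 : s ≠ 0) (hstop : s ≠ ⊤) :
    (volume.withDensity fun x => ENNReal.ofReal (w x)) {x | s < maximalOn Ω f x} ≤
      50 / s * ∫⁻ y in Ω ∩ {x | s < 2 * (‖f x‖₊ : ℝ≥0∞)},
        (‖f y‖₊ : ℝ≥0∞) * maximalOn Set.univ w y := by
  set μ := volume.withDensity fun x => ENNReal.ofReal (w x) with hμ
  haveI : IsFiniteMeasureOnCompacts μ := finiteOnCompacts hwi
  haveI : IsLocallyFiniteMeasure μ := isLocallyFiniteMeasure_of_isFiniteMeasureOnCompacts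
  set E := {x | s < maximalOn Ω f x} with hE
  set F := {x : ℂ | s < 2 * (‖f x‖₊ : ℝ≥0∞)} with hF
  set I := ∫⁻ y in Ω ∩ F, (‖f y‖₊ : ℝ≥0∞) * maximalOn Set.univ w y with hI
  rw [(isOpen_lt_maximalOn Ω f s).measure_eq_iSup_isCompact]
  refine iSup_le fun K => iSup_le fun hKE => iSup_le fun hK => ?_
  -- choose balls
  have hch : ∀ x : ℂ, x ∈ E → ∃ c r, 0 < r ∧ x ∈ ball c r ∧ ball c r ⊆ Ω ∧
      s < (∫⁻ y in ball c r, (‖f y‖₊ : ℝ≥0∞)) / volume (ball c r) :=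
    fun x hx => exists_ball_of_lt hx
  choose! cc rr h1 h2 h3 h4 using hch
  obtain ⟨T, hT⟩ := hK.elim_finite_subcover (fun i : E => ball (cc i) (rr i))
    (fun i => isOpen_ball) (fun x hx => mem_iUnion.2 ⟨⟨x, hKE hx⟩, h2 x (hKE hx)⟩)
  rcases T.eq_empty_or_nonempty with rfl | hTne
  · simp only [Finset.notMem_empty, iUnion_of_empty, iUnion_empty] at hT
    rw [subset_empty_iff.1 hT]
    simp
  obtain ⟨u, huT, hdisj, hcov⟩ :=
    Vitali.exists_disjoint_subfamily_covering_enlargement_closedBall (↑T : Set ↥E)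
      (fun i => cc i) (fun i => rr i) (T.sup' hTne fun i => rr i)
      (fun a ha => Finset.le_sup' (fun i : ↥E => rr ↑i) ha) 4 (by norm_num)
  have hufin : u.Finite := T.finite_toSet.subset huT
  have hballs : ∀ b : ↥E, b ∈ u → 0 < rr b ∧ ball (cc b) (rr b) ⊆ Ω ∧
      s < (∫⁻ y in ball (cc b) (rr b), (‖f y‖₊ : ℝ≥0∞)) / volume (ball (cc b) (rr b)) :=
    fun b _ => ⟨h1 b b.2, h3 b b.2, h4 b b.2⟩
  have hKsub : K ⊆ ⋃ b ∈ hufin.toFinset, ball (cc b) (5 * rr b) := by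
    intro x hx
    obtain ⟨a, haT, hxa⟩ := mem_iUnion₂.1 (hT hx)
    obtain ⟨b, hbu, hsub⟩ := hcov a haT
    refine mem_biUnion (hufin.mem_toFinset.2 hbu) ?_
    have hrb : 0 < rr b := h1 b b.2
    exact closedBall_subset_ball (by linarith) (hsub (ball_subset_closedBall hxa))
  calc μ K ≤ μ (⋃ b ∈ hufin.toFinset, ball (cc b) (5 * rr b)) := measure_mono hKsub
    _ ≤ ∑ b ∈ hufin.toFinset, μ (ball (cc b) (5 * rr b)) := measure_biUnion_finset_le _ _
    _ ≤ ∑ b ∈ hufin.toFinset, 50 / s * ∫⁻ y in ball (cc b) (rr b) ∩ F,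
          (‖f y‖₊ : ℝ≥0∞) * maximalOn Set.univ w y := by
        refine Finset.sum_le_sum fun b hb => ?_
        obtain ⟨hrb, hsubb, havgb⟩ := hballs b (hufin.mem_toFinset.1 hb)
        exact perBall hf hw hs0 hstop hrb hsubb havgb (measure_ball_lt_top).ne
    _ = 50 / s * ∑ b ∈ hufin.toFinset, ∫⁻ y in ball (cc b) (rr b) ∩ F,
          (‖f y‖₊ : ℝ≥0∞) * maximalOn Set.univ w y := by rw [Finset.mul_sum]
    _ = 50 / s * ∫⁻ y in ⋃ b ∈ hufin.toFinset, (ball (cc b) (rr b) ∩ F),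
          (‖f y‖₊ : ℝ≥0∞) * maximalOn Set.univ w y := by
        congr 1
        refine (lintegral_biUnion_finset ?_ (fun b _ => measurableSet_ball.inter ?_) _).symm
        · intro b hb b' hb' hne
          have := hdisj (hufin.mem_toFinset.1 hb) (hufin.mem_toFinset.1 hb') hne
          exact this.mono (inter_subset_left.trans ball_subset_closedBall)
            (inter_subset_left.trans ball_subset_closedBall)
        · have : Measurable fun x => 2 * (‖f x‖₊ : ℝ≥0∞) :=
            (hf.nnnorm.coe_nnreal_ennreal).const_mul 2
          exact measurableSet_lt measurable_const this
    _ ≤ 50 / s * I := by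
        refine mul_le_mul_right (lintegral_mono_set ?_) _
        refine iUnion₂_subset fun b hb => ?_
        exact inter_subset_inter_left _ (h3 b b.2)


/-- `x^(p-1) * x = x^p` for finite `x`. -/
lemma rpow_sub_one_mul {p : ℝ} (hp : 1 < p) (b : ℝ≥0) :
    (b : ℝ≥0∞) ^ (p - 1) * (b : ℝ≥0∞) = (b : ℝ≥0∞) ^ p := by
  rcases eq_or_ne b 0 with rfl | hb
  · rw [ENNReal.coe_zero, mul_zero, ENNReal.zero_rpow_of_pos (by linarith)]
  · have h0 : (b : ℝ≥0∞) ≠ 0 := by exact_mod_cast hb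
    have htop : (b : ℝ≥0∞) ≠ ⊤ := ENNReal.coe_ne_top
    calc (b : ℝ≥0∞) ^ (p - 1) * (b : ℝ≥0∞) = (b : ℝ≥0∞) ^ (p - 1) * (b : ℝ≥0∞) ^ (1:ℝ) := by
          rw [ENNReal.rpow_one]
      _ = (b : ℝ≥0∞) ^ (p - 1 + 1) := (ENNReal.rpow_add _ _ h0 htop).symm
      _ = _ := by norm_num

/-- A Chebyshev-type bound. -/
lemma cheb {Ω : Set ℂ} {f w : ℂ → ℝ} (hf : Measurable f) {p : ℝ} (hp : 1 < p) (t : ℝ) :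
    ∫⁻ y in Ω ∩ {x | eE t < 2 * (‖f x‖₊ : ℝ≥0∞)},
        (‖f y‖₊ : ℝ≥0∞) * maximalOn Set.univ w y ≤
      eE ((t - 1) * (1 - p)) * ∫⁻ x in Ω, (‖f x‖₊ : ℝ≥0∞) ^ p * maximalOn Set.univ w x := by
  set W := maximalOn Set.univ w with hW
  have hWm : Measurable W := measurable_maximalOn _ _
  have hpt : ∀ y, y ∈ Ω ∩ {x | eE t < 2 * (‖f x‖₊ : ℝ≥0∞)} →
      (‖f y‖₊ : ℝ≥0∞) * W y ≤ eE ((t - 1) * (1 - p)) * ((‖f y‖₊ : ℝ≥0∞) ^ p * W y) := by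
    rintro y ⟨-, hy⟩
    have hy' : eE t < 2 * (‖f y‖₊ : ℝ≥0∞) := hy
    have h2 : eE (t - 1) < (‖f y‖₊ : ℝ≥0∞) := by
      have ht2 : 2 * eE (t - 1) = eE t := by
        rw [← eE_one, ← eE_add]; congr 1; ring
      have : 2 * eE (t - 1) < 2 * (‖f y‖₊ : ℝ≥0∞) := by rw [ht2]; exact hy'
      exact lt_of_mul_lt_mul_left' this
    set b := (‖f y‖₊ : ℝ≥0∞) with hb
    have hb0 : b ≠ 0 := by intro h; rw [h] at h2; exact absurd h2 (by simp)
    have hbtop : b ≠ ⊤ := ENNReal.coe_ne_top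
    have key : b ≤ eE ((t - 1) * (1 - p)) * b ^ p := by
      have hsplit : b = b ^ (1 - p) * b ^ p := by
        rw [← ENNReal.rpow_add _ _ hb0 hbtop]
        norm_num
      have hle : b ^ (1 - p) ≤ eE ((t - 1) * (1 - p)) := by
        have h3 : eE (t - 1) ^ (p - 1) ≤ b ^ (p - 1) :=
          ENNReal.rpow_le_rpow h2.le (by linarith)
        calc b ^ (1 - p) = (b ^ (p - 1))⁻¹ := by
              rw [← ENNReal.rpow_neg]; norm_num
          _ ≤ (eE (t - 1) ^ (p - 1))⁻¹ := ENNReal.inv_le_inv.2 h3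
          _ = eE ((t - 1) * (1 - p)) := by
              rw [eE_rpow, eE_inv]; congr 1; ring
      calc b = b ^ (1 - p) * b ^ p := hsplit
        _ ≤ eE ((t - 1) * (1 - p)) * b ^ p := mul_le_mul_left hle _
    calc b * W y ≤ (eE ((t - 1) * (1 - p)) * b ^ p) * W y := mul_le_mul_left key _
      _ = eE ((t - 1) * (1 - p)) * (b ^ p * W y) := mul_assoc _ _ _
  calc ∫⁻ y in Ω ∩ {x | eE t < 2 * (‖f x‖₊ : ℝ≥0∞)}, (‖f y‖₊ : ℝ≥0∞) * W y
      ≤ ∫⁻ y in Ω ∩ {x | eE t < 2 * (‖f x‖₊ : ℝ≥0∞)},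
          eE ((t - 1) * (1 - p)) * ((‖f y‖₊ : ℝ≥0∞) ^ p * W y) := by
        apply setLIntegral_mono_ae
          (((hf.nnnorm.coe_nnreal_ennreal.pow_const p).mul hWm).const_mul _).aemeasurable
        exact ae_of_all _ hpt
    _ = eE ((t - 1) * (1 - p)) * ∫⁻ y in Ω ∩ {x | eE t < 2 * (‖f x‖₊ : ℝ≥0∞)},
          (‖f y‖₊ : ℝ≥0∞) ^ p * W y := lintegral_const_mul' _ _ (eE_ne_top _)
    _ ≤ _ := mul_le_mul_right (lintegral_mono_set inter_subset_left) _


end LocalFS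

open LocalFS

/-- **A local Fefferman–Stein weighted maximal inequality.**
For an open set `Ω ⊆ ℝ²`, `1 < p < ⊤`, a nonnegative locally integrable weight `w` and a
measurable `f`, `∫_Ω (M_Ω f)^p w ≤ C(p) ∫_Ω |f|^p Mw`, where `M_Ω` is the local
Hardy–Littlewood maximal operator on `Ω` and `M` the global one. -/
theorem local_fefferman_stein (p : ℝ) (hp : 1 < p) :
    ∃ C : ℝ, 0 < C ∧
    ∀ (Ω : Set ℂ) (f w : ℂ → ℝ),
      IsOpen Ω → Measurable f →
      (∀ x, 0 ≤ w x) → LocallyIntegrable w volume →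
      (∫⁻ x in Ω, maximalOn Ω f x ^ p * ENNReal.ofReal (w x)) ≤
        ENNReal.ofReal C *
          ∫⁻ x in Ω, (‖f x‖₊ : ℝ≥0∞) ^ p * maximalOn Set.univ w x := by
  classical
  have hp0 : (0:ℝ) < p := by linarith
  set c1 : ℝ≥0∞ := (1 - eE (1 - p))⁻¹ with hc1
  have hc1top : c1 ≠ ⊤ := by
    rw [hc1, Ne, ENNReal.inv_eq_top, tsub_eq_zero_iff_le]
    exact not_le.2 (eE_lt_one (by linarith))
  set c2 : ℝ≥0∞ := 50 * eE (p + 1) * c1 * ENNReal.ofReal ((4:ℝ) ^ (p - 1)) with hc2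
  have hc2top : c2 ≠ ⊤ :=
    ENNReal.mul_ne_top (ENNReal.mul_ne_top (ENNReal.mul_ne_top (by norm_num) (eE_ne_top _))
      hc1top) ENNReal.ofReal_ne_top
  refine ⟨c2.toReal + 1, by positivity, ?_⟩
  intro Ω f w hΩ hf hw hwi
  have hofC : ENNReal.ofReal (c2.toReal + 1) = c2 + 1 := by
    rw [ENNReal.ofReal_add ENNReal.toReal_nonneg zero_le_one, ENNReal.ofReal_toReal hc2top,
      ENNReal.ofReal_one]
  set W := maximalOn Set.univ w with hW
  have hWm : Measurable W := measurable_maximalOn _ _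
  set M := maximalOn Ω f with hM
  have hMm : Measurable M := measurable_maximalOn _ _
  have hMp : Measurable fun y => M y ^ p := hMm.pow_const p
  set A := ∫⁻ x in Ω, (‖f x‖₊ : ℝ≥0∞) ^ p * W x with hA
  rw [hofC]
  rcases eq_or_ne A ⊤ with hAtop | hAtop
  · rw [hAtop, ENNReal.mul_top (by simp)]
    exact le_top
  set μ := volume.withDensity fun x => ENNReal.ofReal (w x) with hμ
  haveI : IsFiniteMeasureOnCompacts μ := finiteOnCompacts hwi
  have hwae : AEMeasurable (fun x => ENNReal.ofReal (w x)) (volume.restrict Ω) :=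
    (ENNReal.measurable_ofReal.comp_aemeasurable
      hwi.aestronglyMeasurable.aemeasurable).restrict
  have hLHS : (∫⁻ x in Ω, M x ^ p * ENNReal.ofReal (w x)) = ∫⁻ x in Ω, M x ^ p ∂μ := by
    rw [hμ, setLIntegral_withDensity_eq_setLIntegral_mul_non_measurable₀ volume hwae
      (fun x => M x ^ p) hΩ.measurableSet (ae_of_all _ fun x => ENNReal.ofReal_lt_top)]
    exact lintegral_congr fun x => mul_comm _ _
  rw [hLHS]
  -- dyadic shells
  set G : ℤ → Set ℂ := fun k => {x | eE (k:ℝ) ≤ M x} with hG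
  have hGm : ∀ k, MeasurableSet (G k) := fun k => measurableSet_le measurable_const hMm
  set Inf := {x | M x = ⊤} with hInf
  have hInfm : MeasurableSet Inf := hMm (measurableSet_singleton ⊤)
  -- pointwise decomposition
  have hpt : ∀ x, M x ^ p ≤ Inf.indicator (fun y => M y ^ p) x
      + ∑' k : ℤ, (G k \ G (k+1)).indicator (fun y => M y ^ p) x := by
    intro x
    rcases eq_or_ne (M x) ⊤ with hx | hx
    · have h1 : Inf.indicator (fun y => M y ^ p) x = M x ^ p :=
        Set.indicator_of_mem (show x ∈ Inf from hx) fun y => M y ^ p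
      rw [← h1]; exact self_le_add_right _ _
    rcases eq_or_ne (M x) 0 with hx0 | hx0
    · rw [hx0, ENNReal.zero_rpow_of_pos hp0]; exact zero_le
    have hmpos : 0 < (M x).toReal := ENNReal.toReal_pos hx0 hx
    set m := (M x).toReal with hm
    set k := ⌊Real.logb 2 m⌋ with hk
    have hxk : x ∈ G k \ G (k+1) := by
      constructor
      · show eE (k:ℝ) ≤ M x
        have h1 : (2:ℝ) ^ (k:ℝ) ≤ m := by
          calc (2:ℝ) ^ (k:ℝ) ≤ (2:ℝ) ^ (Real.logb 2 m) :=
              (Real.rpow_le_rpow_left_iff one_lt_two).2 (Int.floor_le _)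
            _ = m := Real.rpow_logb two_pos (by norm_num) hmpos
        calc eE (k:ℝ) ≤ ENNReal.ofReal m := ENNReal.ofReal_le_ofReal h1
          _ = M x := ENNReal.ofReal_toReal hx
      · show ¬ (eE ((k+1 : ℤ):ℝ) ≤ M x)
        rw [not_le]
        have h2 : m < (2:ℝ) ^ ((k:ℝ)+1) := by
          calc m = (2:ℝ) ^ (Real.logb 2 m) :=
              (Real.rpow_logb two_pos (by norm_num) hmpos).symm
            _ < _ := (Real.rpow_lt_rpow_left_iff one_lt_two).2 (Int.lt_floor_add_one _)
        calc M x = ENNReal.ofReal m := (ENNReal.ofReal_toReal hx).symm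
          _ < eE ((k:ℝ)+1) := (ENNReal.ofReal_lt_ofReal_iff (by positivity)).2 h2
          _ = eE ((k+1 : ℤ):ℝ) := by norm_num
    calc M x ^ p = (G k \ G (k+1)).indicator (fun y => M y ^ p) x :=
        (Set.indicator_of_mem hxk fun y => M y ^ p).symm
      _ ≤ ∑' i : ℤ, (G i \ G (i+1)).indicator (fun y => M y ^ p) x := ENNReal.le_tsum k
      _ ≤ _ := self_le_add_left _ _
  -- μ Inf = 0
  have hInf0 : μ Inf = 0 := by
    have hb : ∀ n : ℕ, μ Inf ≤ (50 * eE (p - 1) * A) * eE (-p) ^ n := by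
      intro n
      have hsub : Inf ⊆ {x | eE (n:ℝ) < M x} := fun x hx => by
        show eE (n:ℝ) < M x
        rw [hx]; exact (eE_ne_top _).lt_top
      calc μ Inf ≤ μ {x | eE (n:ℝ) < M x} := measure_mono hsub
        _ ≤ 50 / eE (n:ℝ) * ∫⁻ y in Ω ∩ {x | eE (n:ℝ) < 2 * (‖f x‖₊ : ℝ≥0∞)},
              (‖f y‖₊ : ℝ≥0∞) * W y := weak hf hw hwi (eE_ne_zero _) (eE_ne_top _)
        _ ≤ 50 / eE (n:ℝ) * (eE (((n:ℝ) - 1) * (1 - p)) * A) :=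
            mul_le_mul_right (cheb hf hp (n:ℝ)) _
        _ = (50 * eE (p - 1) * A) * eE (-p) ^ n := by
            rw [← ENNReal.rpow_natCast (eE (-p)) n, eE_rpow, ENNReal.div_eq_inv_mul, eE_inv]
            have hee : eE (-(n:ℝ)) * eE (((n:ℝ) - 1) * (1 - p)) = eE (p - 1) * eE (-p * (n:ℝ)) := by
              rw [← eE_add, ← eE_add]; congr 1; ring
            calc eE (-(n:ℝ)) * 50 * (eE (((n:ℝ) - 1) * (1 - p)) * A)
                = 50 * A * (eE (-(n:ℝ)) * eE (((n:ℝ) - 1) * (1 - p))) := by ring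
              _ = 50 * A * (eE (p - 1) * eE (-p * (n:ℝ))) := by rw [hee]
              _ = 50 * eE (p - 1) * A * eE (-p * (n:ℝ)) := by ring
    have htend : Tendsto (fun n : ℕ => (50 * eE (p - 1) * A) * eE (-p) ^ n) atTop (𝓝 0) := by
      have h0 : Tendsto (fun n : ℕ => eE (-p) ^ n) atTop (𝓝 0) :=
        ENNReal.tendsto_pow_atTop_nhds_zero_of_lt_one (eE_lt_one (by linarith))
      have hcne : (50 * eE (p - 1) * A) ≠ ⊤ :=
        ENNReal.mul_ne_top (ENNReal.mul_ne_top (by norm_num) (eE_ne_top _)) hAtop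
      have := ENNReal.Tendsto.const_mul (a := 50 * eE (p - 1) * A) h0 (Or.inr hcne)
      simpa using this
    exact le_antisymm (ge_of_tendsto' htend hb) (zero_le)
  -- the distribution sets for f
  have hFm : ∀ k : ℤ, MeasurableSet {x : ℂ | eE ((k:ℝ) - 1) < 2 * (‖f x‖₊ : ℝ≥0∞)} :=
    fun k => measurableSet_lt measurable_const ((hf.nnnorm.coe_nnreal_ennreal).const_mul 2)
  have hgWm : Measurable fun y => (‖f y‖₊ : ℝ≥0∞) * W y :=
    hf.nnnorm.coe_nnreal_ennreal.mul hWm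
  have hck : ∀ k : ℤ, (50 : ℝ≥0∞) * eE (((k:ℝ) + 1) * p - ((k:ℝ) - 1)) ≠ ⊤ :=
    fun k => ENNReal.mul_ne_top (by norm_num) (eE_ne_top _)
  calc ∫⁻ x in Ω, M x ^ p ∂μ
      ≤ ∫⁻ x in Ω, (Inf.indicator (fun y => M y ^ p) x
          + ∑' k : ℤ, (G k \ G (k+1)).indicator (fun y => M y ^ p) x) ∂μ :=
        lintegral_mono hpt
    _ = (∫⁻ x in Ω, Inf.indicator (fun y => M y ^ p) x ∂μ)
          + ∫⁻ x in Ω, ∑' k : ℤ, (G k \ G (k+1)).indicator (fun y => M y ^ p) x ∂μ :=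
        lintegral_add_left (hMp.indicator hInfm) _
    _ = 0 + ∑' k : ℤ, ∫⁻ x in Ω, (G k \ G (k+1)).indicator (fun y => M y ^ p) x ∂μ := by
        congr 1
        · rw [lintegral_indicator hInfm]
          apply setLIntegral_measure_zero
          exact le_antisymm ((Measure.restrict_apply_le _ _).trans hInf0.le) (zero_le)
        · exact lintegral_tsum fun k =>
            (hMp.indicator ((hGm k).diff (hGm (k+1)))).aemeasurable
    _ ≤ 0 + ∑' k : ℤ, (50 * eE (((k:ℝ) + 1) * p - ((k:ℝ) - 1))) *
          ∫⁻ x in Ω, ({x : ℂ | eE ((k:ℝ) - 1) < 2 * (‖f x‖₊ : ℝ≥0∞)}.indicator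
            (fun y => (‖f y‖₊ : ℝ≥0∞) * W y)) x := by
        refine add_le_add_right (ENNReal.tsum_le_tsum fun k => ?_) 0
        have hIk : ∫⁻ y in Ω ∩ {x : ℂ | eE ((k:ℝ) - 1) < 2 * (‖f x‖₊ : ℝ≥0∞)},
            (‖f y‖₊ : ℝ≥0∞) * W y
            = ∫⁻ x in Ω, ({x : ℂ | eE ((k:ℝ) - 1) < 2 * (‖f x‖₊ : ℝ≥0∞)}.indicator
              (fun y => (‖f y‖₊ : ℝ≥0∞) * W y)) x := by
          rw [lintegral_indicator (hFm k), Measure.restrict_restrict (hFm k), inter_comm]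
        rw [← hIk]
        calc ∫⁻ x in Ω, (G k \ G (k+1)).indicator (fun y => M y ^ p) x ∂μ
            = ∫⁻ x in G k \ G (k+1), M x ^ p ∂(μ.restrict Ω) :=
              lintegral_indicator ((hGm k).diff (hGm (k+1))) _
          _ ≤ ∫⁻ _ in G k \ G (k+1), eE (((k:ℝ) + 1) * p) ∂(μ.restrict Ω) := by
              apply setLIntegral_mono_ae aemeasurable_const
              refine ae_of_all _ fun x hx => ?_
              have hlt : M x < eE ((k:ℝ) + 1) := by
                have := hx.2
                rw [hG] at this
                simp only [mem_setOf_eq, not_le] at this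
                convert this using 2
                push_cast
                ring
              calc M x ^ p ≤ (eE ((k:ℝ) + 1)) ^ p :=
                  ENNReal.rpow_le_rpow hlt.le (le_of_lt hp0)
                _ = eE (((k:ℝ) + 1) * p) := eE_rpow _ _
          _ = eE (((k:ℝ) + 1) * p) * (μ.restrict Ω) (G k \ G (k+1)) := setLIntegral_const _ _
          _ ≤ eE (((k:ℝ) + 1) * p) * (50 / eE ((k:ℝ) - 1) *
              ∫⁻ y in Ω ∩ {x : ℂ | eE ((k:ℝ) - 1) < 2 * (‖f x‖₊ : ℝ≥0∞)},
                (‖f y‖₊ : ℝ≥0∞) * W y) := by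
              refine mul_le_mul_right ?_ _
              refine le_trans ?_ (weak hf hw hwi (eE_ne_zero ((k:ℝ) - 1)) (eE_ne_top _))
              refine le_trans (Measure.restrict_apply_le _ _) (measure_mono ?_)
              intro x hx
              exact lt_of_lt_of_le (eE_lt (by linarith : (k:ℝ) - 1 < (k:ℝ))) hx.1
          _ = (50 * eE (((k:ℝ) + 1) * p - ((k:ℝ) - 1))) *
              ∫⁻ y in Ω ∩ {x : ℂ | eE ((k:ℝ) - 1) < 2 * (‖f x‖₊ : ℝ≥0∞)},
                (‖f y‖₊ : ℝ≥0∞) * W y := by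
              rw [← mul_assoc]
              congr 1
              calc eE (((k:ℝ) + 1) * p) * (50 / eE ((k:ℝ) - 1))
                  = 50 * (eE (((k:ℝ) + 1) * p) * (eE ((k:ℝ) - 1))⁻¹) := by
                    rw [ENNReal.div_eq_inv_mul]; ring
                _ = 50 * eE (((k:ℝ) + 1) * p - ((k:ℝ) - 1)) := by
                    rw [eE_inv, ← eE_add, show ((k:ℝ) + 1) * p + -((k:ℝ) - 1)
                      = ((k:ℝ) + 1) * p - ((k:ℝ) - 1) from by ring]
    _ = 0 + ∫⁻ x in Ω, ∑' k : ℤ, (50 * eE (((k:ℝ) + 1) * p - ((k:ℝ) - 1))) *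
          ({x : ℂ | eE ((k:ℝ) - 1) < 2 * (‖f x‖₊ : ℝ≥0∞)}.indicator
            (fun y => (‖f y‖₊ : ℝ≥0∞) * W y)) x := by
        congr 1
        calc ∑' k : ℤ, (50 * eE (((k:ℝ) + 1) * p - ((k:ℝ) - 1))) *
              ∫⁻ x in Ω, ({x : ℂ | eE ((k:ℝ) - 1) < 2 * (‖f x‖₊ : ℝ≥0∞)}.indicator
                (fun y => (‖f y‖₊ : ℝ≥0∞) * W y)) x
            = ∑' k : ℤ, ∫⁻ x in Ω, (50 * eE (((k:ℝ) + 1) * p - ((k:ℝ) - 1))) *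
              ({x : ℂ | eE ((k:ℝ) - 1) < 2 * (‖f x‖₊ : ℝ≥0∞)}.indicator
                (fun y => (‖f y‖₊ : ℝ≥0∞) * W y)) x :=
              tsum_congr fun k => (lintegral_const_mul' _ _ (hck k)).symm
          _ = _ := (lintegral_tsum fun k =>
              ((hgWm.indicator (hFm k)).const_mul _).aemeasurable).symm
    _ ≤ 0 + ∫⁻ x in Ω, c2 * ((‖f x‖₊ : ℝ≥0∞) ^ p * W x) := by
        refine add_le_add_right (lintegral_mono fun x => ?_) 0
        have hind : ∀ k : ℤ, (50 * eE (((k:ℝ) + 1) * p - ((k:ℝ) - 1))) *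
            ({x : ℂ | eE ((k:ℝ) - 1) < 2 * (‖f x‖₊ : ℝ≥0∞)}.indicator
              (fun y => (‖f y‖₊ : ℝ≥0∞) * W y)) x
            = (if eE ((k:ℝ) - 1) < 2 * ((‖f x‖₊ : ℝ≥0) : ℝ≥0∞) then
                (50 : ℝ≥0∞) * eE (((k:ℝ) + 1) * p - ((k:ℝ) - 1)) else 0) *
              ((‖f x‖₊ : ℝ≥0∞) * W x) := by
          intro k
          simp only [Set.indicator_apply, mem_setOf_eq]
          split_ifs with h
          · rfl
          · simp
        rw [tsum_congr hind, ENNReal.tsum_mul_right]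
        have hpts := ptsum hp ‖f x‖₊
        rw [← hc1, ← hc2] at hpts
        calc (∑' k : ℤ, if eE ((k:ℝ) - 1) < 2 * ((‖f x‖₊ : ℝ≥0) : ℝ≥0∞) then
              (50 : ℝ≥0∞) * eE (((k:ℝ) + 1) * p - ((k:ℝ) - 1)) else 0) *
              ((‖f x‖₊ : ℝ≥0∞) * W x)
            ≤ (c2 * (‖f x‖₊ : ℝ≥0∞) ^ (p - 1)) * ((‖f x‖₊ : ℝ≥0∞) * W x) :=
              mul_le_mul_left hpts _
          _ = c2 * (((‖f x‖₊ : ℝ≥0∞) ^ (p - 1) * (‖f x‖₊ : ℝ≥0∞)) * W x) := by ring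
          _ = c2 * ((‖f x‖₊ : ℝ≥0∞) ^ p * W x) := by rw [rpow_sub_one_mul hp]
    _ = 0 + c2 * A := by
        congr 1
        exact lintegral_const_mul' _ _ hc2top
    _ ≤ (c2 + 1) * A := by
        rw [zero_add]
        exact mul_le_mul_left (self_le_add_right _ _) _
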